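/- There exist an entire function f : ℂ → ℂ and a quadratic polynomial q(z) = a₂z² + a₁z + a₀ with complex coefficients such that: (1) some Taylor coefficient of f at 0 is not real, and some coefficient of q is not real; (2) a₀ and a₂ are both real; and (3) every Taylor coefficient of the composition f ∘ q at 0 is real. -/

import Mathlib

open Complex Real

/-- Power series with coefficients `1/(2n)!` : its sum is `cosh ∘ sqrt`. -/
noncomputable def pSer : FormalMultilinearSeries ℂ ℂ ℂ :=
  fun n => ContinuousMultilinearMap.mkPiRing ℂ (Fin n) ((1 : ℂ) / (2 * n).factorial)

lemma pSer_radius : pSer.radius = ⊤ := by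
  apply pSer.radius_eq_top_of_summable_norm
  intro r
  refine Summable.of_nonneg_of_le (fun n => by positivity) (fun n => ?_)
    (Real.summable_pow_div_factorial (r : ℝ))
  rw [pSer, ContinuousMultilinearMap.norm_mkPiRing]
  have h1 : ‖(1 : ℂ) / ((2 * n).factorial : ℂ)‖ = 1 / ((2 * n).factorial : ℝ) := by
    simp [norm_div]
  rw [h1]
  have h2 : (n.factorial : ℝ) ≤ ((2 * n).factorial : ℝ) := by
    exact_mod_cast Nat.factorial_le (by omega)
  have h3 : (0:ℝ) < n.factorial := by exact_mod_cast n.factorial_pos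
  calc 1 / ((2*n).factorial : ℝ) * (r:ℝ)^n ≤ 1 / (n.factorial : ℝ) * (r:ℝ)^n := by
        apply mul_le_mul_of_nonneg_right _ (by positivity)
        apply one_div_le_one_div_of_le h3 h2
    _ = (r:ℝ)^n / n.factorial := by ring

noncomputable def gFun : ℂ → ℂ := pSer.sum

lemma gFun_hasSum (v : ℂ) : HasSum (fun n : ℕ => v ^ n / ((2 * n).factorial : ℂ)) (gFun v) := by
  have h := pSer.hasSum (x := v) (by rw [pSer_radius]; exact edist_lt_top _ _)
  convert h using 2 with n
  · rfl
  · simp [pSer, ContinuousMultilinearMap.mkPiRing_apply]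
    ring
  · rfl

lemma gFun_diff : Differentiable ℂ gFun := by
  have h := pSer.hasFPowerSeriesOnBall (by rw [pSer_radius]; exact ENNReal.zero_lt_top)
  have := h.differentiableOn
  rw [pSer_radius] at this
  intro x
  exact (this x (by simp)).differentiableAt (by simp [EMetric.isOpen_ball.mem_nhds])

lemma gFun_sq (s : ℂ) : gFun (s ^ 2) = Complex.cosh s := by
  have h1 := Complex.hasSum_cos (s * I)
  rw [Complex.cos_mul_I] at h1
  have h2 : (fun n : ℕ => (-1 : ℂ) ^ n * (s * I) ^ (2 * n) / ((2 * n).factorial : ℂ))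
      = fun n : ℕ => (s ^ 2) ^ n / ((2 * n).factorial : ℂ) := by
    funext n
    have hx : ((-1:ℂ)) * (s ^ 2 * -1) = s ^ 2 := by ring
    rw [pow_mul, mul_pow, Complex.I_sq, ← mul_pow, hx]
  rw [h2] at h1
  exact ((gFun_hasSum (s ^ 2)).unique h1)

noncomputable def fFun : ℂ → ℂ := fun w => I * gFun (w - (π : ℂ) ^ 2 / 4)

lemma fFun_diff : Differentiable ℂ fFun := by
  apply Differentiable.const_mul
  exact gFun_diff.comp (differentiable_id.sub_const _)

lemma fFun_comp (z : ℂ) :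
    fFun (1 * z ^ 2 + (π : ℂ) * I * z + 0) = -Complex.sinh z := by
  have harg : (1 : ℂ) * z ^ 2 + (π : ℂ) * I * z + 0 - (π : ℂ) ^ 2 / 4
      = (z + (π : ℂ) * I / 2) ^ 2 := by
    linear_combination (-(π:ℂ)^2/4) * Complex.I_sq
  rw [fFun]
  simp only [harg]
  rw [gFun_sq]
  have : z + (π : ℂ) * I / 2 = z + (↑(π/2) : ℂ) * I := by push_cast; ring
  rw [this, Complex.cosh_add, Complex.cosh_mul_I, Complex.sinh_mul_I]
  push_cast
  rw [Complex.cos_pi_div_two, Complex.sin_pi_div_two]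
  ring_nf
  rw [Complex.I_sq]
  ring

theorem stmt13 : ∃ (f : ℂ → ℂ) (a₂ a₁ a₀ : ℂ),
    Differentiable ℂ f ∧ a₂ ≠ 0 ∧
    (∃ k : ℕ, (iteratedDeriv k f 0 / (Nat.factorial k : ℂ)).im ≠ 0) ∧
    (a₂.im ≠ 0 ∨ a₁.im ≠ 0 ∨ a₀.im ≠ 0) ∧
    a₀.im = 0 ∧ a₂.im = 0 ∧
    (∀ k : ℕ,
      (iteratedDeriv k (fun z => f (a₂ * z ^ 2 + a₁ * z + a₀)) 0 /
        (Nat.factorial k : ℂ)).im = 0) := by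
  refine ⟨fFun, 1, (π : ℂ) * I, 0, fFun_diff, one_ne_zero, ?_, ?_, by simp, by simp, ?_⟩
  · -- f'(0) = I/π is not real
    refine ⟨1, ?_⟩
    have hcomp : (fun z : ℂ => fFun (1 * z ^ 2 + (π : ℂ) * I * z + 0))
        = fun z => -Complex.sinh z := funext fFun_comp
    have hq : HasDerivAt (fun z : ℂ => 1 * z ^ 2 + (π : ℂ) * I * z + 0) ((π : ℂ) * I) 0 := by
      have h1 : HasDerivAt (fun z : ℂ => 1 * z ^ 2 + (π : ℂ) * I * z + 0)
          (1 * (2 * 0 ^ 1) + (π : ℂ) * I * 1 + 0) 0 := by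
        exact (((hasDerivAt_pow 2 (0:ℂ)).const_mul 1).add
          ((hasDerivAt_id (0:ℂ)).const_mul ((π : ℂ) * I))).add (hasDerivAt_const _ _)
      simpa using h1
    have hf0 : HasDerivAt fFun (deriv fFun 0) 0 := (fFun_diff 0).hasDerivAt
    have hch : HasDerivAt (fFun ∘ (fun z : ℂ => 1 * z ^ 2 + (π:ℂ) * I * z + 0))
        (deriv fFun 0 * ((π:ℂ) * I)) 0 :=
      HasDerivAt.comp_of_eq 0 hf0 hq (by norm_num)
    have hch2 : HasDerivAt (fun z => -Complex.sinh z) (deriv fFun 0 * ((π:ℂ) * I)) 0 := by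
      rw [← hcomp]; exact hch
    have hval : HasDerivAt (fun z => -Complex.sinh z) (-1 : ℂ) 0 := by
      have h := (Complex.hasDerivAt_sinh 0).neg
      rw [Complex.cosh_zero] at h
      exact h
    have heq : deriv fFun 0 * ((π:ℂ) * I) = -1 := hch2.unique hval
    have hne : ((π:ℂ) * I) ≠ 0 := by
      simp [Complex.ext_iff, Real.pi_ne_zero]
    have hd : deriv fFun 0 = (-1) / ((π:ℂ) * I) := (eq_div_iff hne).mpr heq
    have hd2 : deriv fFun 0 = I / (π : ℂ) := by
      rw [hd, div_eq_div_iff hne (by exact_mod_cast Complex.ofReal_ne_zero.mpr Real.pi_ne_zero)]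
      linear_combination (-(π:ℂ)) * Complex.I_sq
    rw [iteratedDeriv_one, hd2]
    simp [Complex.div_im, Complex.normSq_ofReal, Real.pi_ne_zero]
  · right; left; simp [Complex.ext_iff, Real.pi_ne_zero]
  · -- all coefficients of f ∘ q are real
    intro k
    have hcomp : (fun z : ℂ => fFun (1 * z ^ 2 + (π : ℂ) * I * z + 0))
        = fun z => -Complex.sinh z := funext fFun_comp
    rw [hcomp]
    have key : ∀ k : ℕ, (iteratedDeriv k Complex.sinh 0).im = 0 ∧
        (iteratedDeriv k Complex.cosh 0).im = 0 := by
      intro k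
      induction k with
      | zero => simp
      | succ n ih =>
        rw [iteratedDeriv_succ', iteratedDeriv_succ', Complex.deriv_sinh, Complex.deriv_cosh]
        exact ⟨ih.2, ih.1⟩
    rw [show (fun z => -Complex.sinh z) = -Complex.sinh from rfl, iteratedDeriv_neg]
    simp [Complex.div_im, (key k).1]
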